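/- Let C_1,...,C_l be closed convex subsets of ℝ^m with nonempty intersection, and let x_{n+1} = P_{C_{(n mod l)+1}}(x_n). Then the sequence (x_n) converges to a point in the intersection ∩_{i=1}^l C_i. -/

import Mathlib

open Filter Topology Bornology RealInnerProductSpace

set_option maxHeartbeats 800000

/-- `p` is the least-squares (metric) projection of `y` onto `S`. -/
def IsProjOn {m : ℕ} (S : Set (EuclideanSpace ℝ (Fin m)))
    (y p : EuclideanSpace ℝ (Fin m)) : Prop :=
  p ∈ S ∧ ∀ z ∈ S, ‖y - p‖ ≤ ‖y - z‖

/-- The variational characterization of the metric projection onto a convex set. -/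
lemma proj_inner {E : Type*} [NormedAddCommGroup E] [InnerProductSpace ℝ E]
    {S : Set E} (hS : Convex ℝ S) {y p : E}
    (hp : p ∈ S) (hmin : ∀ z ∈ S, ‖y - p‖ ≤ ‖y - z‖)
    {z : E} (hz : z ∈ S) : ⟪y - p, z - p⟫ ≤ 0 := by
  by_contra hcon
  push_neg at hcon
  set a : ℝ := ⟪y - p, z - p⟫ with ha
  have hkey : ∀ t : ℝ, 0 ≤ t → t ≤ 1 → 2 * t * a ≤ t ^ 2 * ‖z - p‖ ^ 2 := by
    intro t ht0 ht1
    have hmem : p + t • (z - p) ∈ S := by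
      have := hS hp hz (by linarith : (0:ℝ) ≤ 1 - t) ht0 (by ring)
      convert this using 1
      module
    have hle := hmin _ hmem
    have hsq : ‖y - p‖ ^ 2 ≤ ‖y - (p + t • (z - p))‖ ^ 2 :=
      pow_le_pow_left₀ (norm_nonneg _) hle 2
    have hexp : ‖y - (p + t • (z - p))‖ ^ 2
        = ‖y - p‖ ^ 2 - 2 * t * a + t ^ 2 * ‖z - p‖ ^ 2 := by
      have h1 : y - (p + t • (z - p)) = (y - p) - t • (z - p) := by abel
      rw [h1, norm_sub_sq_real, real_inner_smul_right, norm_smul]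
      simp [mul_pow, ha]
      ring
    rw [hexp] at hsq
    linarith
  have hz0 : 0 < ‖z - p‖ ^ 2 := by
    rcases eq_or_ne z p with rfl | hne
    · simp [ha] at hcon
    · exact pow_pos (norm_pos_iff.mpr (sub_ne_zero.mpr hne)) 2
  set t := min 1 (a / ‖z - p‖ ^ 2) with htdef
  have ht0 : 0 < t := lt_min one_pos (div_pos hcon hz0)
  have ht1 : t ≤ 1 := min_le_left _ _
  have h := hkey t ht0.le ht1
  have h2 : t * ‖z - p‖ ^ 2 ≤ a := by
    have := min_le_right 1 (a / ‖z - p‖ ^ 2)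
    calc t * ‖z - p‖ ^ 2 ≤ (a / ‖z - p‖ ^ 2) * ‖z - p‖ ^ 2 := by
          apply mul_le_mul_of_nonneg_right this hz0.le
      _ = a := div_mul_cancel₀ _ hz0.ne'
  nlinarith

/-- Key inequality for projections onto convex sets. -/
lemma isProjOn_key {m : ℕ} {S : Set (EuclideanSpace ℝ (Fin m))} (hS : Convex ℝ S)
    {y p : EuclideanSpace ℝ (Fin m)} (h : IsProjOn S y p)
    {w : EuclideanSpace ℝ (Fin m)} (hw : w ∈ S) :
    ‖p - w‖ ^ 2 + ‖y - p‖ ^ 2 ≤ ‖y - w‖ ^ 2 := by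
  have hinner : ⟪y - p, w - p⟫ ≤ (0 : ℝ) := proj_inner hS h.1 h.2 hw
  have hsplit : y - w = (y - p) - (w - p) := by abel
  have hnorm : ‖y - w‖ ^ 2
      = ‖y - p‖ ^ 2 - 2 * ⟪y - p, w - p⟫ + ‖w - p‖ ^ 2 := by
    rw [hsplit]; exact norm_sub_sq_real _ _
  have hrev : ‖w - p‖ = ‖p - w‖ := norm_sub_rev _ _
  rw [hrev] at hnorm
  linarith

/-- Convergence of cyclic projections to a point of the intersection. -/
theorem cyclic_projections_converge {m l : ℕ} (hl : 0 < l)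
    (C : Fin l → Set (EuclideanSpace ℝ (Fin m)))
    (hclosed : ∀ i, IsClosed (C i)) (hconv : ∀ i, Convex ℝ (C i))
    (hne : (⋂ i, C i).Nonempty)
    (x : ℕ → EuclideanSpace ℝ (Fin m))
    (hstep : ∀ n, IsProjOn (C ⟨n % l, Nat.mod_lt n hl⟩) (x n) (x (n + 1))) :
    ∃ y ∈ ⋂ i, C i, Filter.Tendsto x Filter.atTop (nhds y) := by
  obtain ⟨w, hw⟩ := hne
  have hwC : ∀ i, w ∈ C i := fun i => Set.mem_iInter.mp hw i
  -- Key step inequality, for any point u of the intersection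
  have key : ∀ (u : EuclideanSpace ℝ (Fin m)), (∀ i, u ∈ C i) → ∀ n,
      ‖x (n + 1) - u‖ ^ 2 + ‖x n - x (n + 1)‖ ^ 2 ≤ ‖x n - u‖ ^ 2 := by
    intro u hu n
    exact isProjOn_key (hconv _) (hstep n) (hu _)
  have keyw := key w hwC
  -- distances to a fixed point of the intersection are antitone
  have anti : ∀ (u : EuclideanSpace ℝ (Fin m)), (∀ i, u ∈ C i) →
      Antitone (fun n => ‖x n - u‖) := by
    intro u hu
    refine antitone_nat_of_succ_le fun n => ?_
    have h := key u hu n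
    have h2 : ‖x (n + 1) - u‖ ^ 2 ≤ ‖x n - u‖ ^ 2 := by
      nlinarith [sq_nonneg (‖x n - x (n+1)‖)]
    exact (pow_le_pow_iff_left₀ (norm_nonneg _) (norm_nonneg _) two_ne_zero).mp h2
  have antiw := anti w hwC
  -- the sequence is bounded
  have hbd : ∀ n, x n ∈ Metric.closedBall w (‖x 0 - w‖) := by
    intro n
    simpa [Metric.mem_closedBall, dist_eq_norm] using antiw (Nat.zero_le n)
  -- the squared distance converges, hence successive differences go to 0
  have hD : Tendsto (fun n => ‖x n - w‖ ^ 2) atTop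
      (𝓝 (⨅ n, ‖x n - w‖ ^ 2)) := by
    refine tendsto_atTop_ciInf (fun a b hab => ?_) ⟨0, ?_⟩
    · exact pow_le_pow_left₀ (norm_nonneg _) (antiw hab) 2
    · rintro b ⟨n, rfl⟩; positivity
  have hdiff0 : Tendsto (fun n => x (n + 1) - x n) atTop (𝓝 0) := by
    have hsq : Tendsto (fun n => ‖x n - x (n + 1)‖ ^ 2) atTop (𝓝 0) := by
      have hle : ∀ n, ‖x n - x (n + 1)‖ ^ 2
          ≤ ‖x n - w‖ ^ 2 - ‖x (n + 1) - w‖ ^ 2 := fun n => by linarith [keyw n]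
      have h0 : Tendsto (fun n => ‖x n - w‖ ^ 2 - ‖x (n + 1) - w‖ ^ 2) atTop (𝓝 0) := by
        have := hD.sub (hD.comp (tendsto_add_atTop_nat 1))
        simpa using this
      exact squeeze_zero (fun n => by positivity) hle h0
    have hn : Tendsto (fun n => ‖x n - x (n + 1)‖) atTop (𝓝 0) := by
      have := hsq.sqrt
      simp only [Real.sqrt_sq (norm_nonneg _), Real.sqrt_zero] at this
      exact this
    rw [tendsto_zero_iff_norm_tendsto_zero]
    simpa [norm_sub_rev] using hn
  -- shifted differences go to 0
  have hshift : ∀ j, Tendsto (fun n => x (n + j) - x n) atTop (𝓝 0) := by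
    intro j
    induction j with
    | zero => simpa using tendsto_const_nhds
    | succ j ih =>
      have h1 : Tendsto (fun n => x (n + j + 1) - x (n + j)) atTop (𝓝 0) :=
        hdiff0.comp (tendsto_add_atTop_nat j)
      have := h1.add ih
      simpa [sub_add_sub_cancel, add_assoc] using this
  -- extract a convergent subsequence
  obtain ⟨y, -, φ, hφmono, hφtend⟩ :=
    tendsto_subseq_of_bounded (Metric.isBounded_closedBall
      (x := w) (r := ‖x 0 - w‖)) hbd
  -- refine to constant residue mod l
  have hres : ∃ r, ∃ᶠ k in atTop, φ k % l = r := by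
    by_contra hcon
    push_neg at hcon
    have : ∀ r, ∀ᶠ k in atTop, φ k % l ≠ r := by
      intro r
      have := hcon r
      exact this
    have hall : ∀ᶠ k in atTop, ∀ r ∈ Finset.range l, φ k % l ≠ r :=
      (Finset.range l).eventually_all.mpr fun r _ => this r
    obtain ⟨k, hk⟩ := hall.exists
    exact hk (φ k % l) (Finset.mem_range.mpr (Nat.mod_lt _ hl)) rfl
  obtain ⟨r, hr⟩ := hres
  obtain ⟨ψ, hψmono, hψ⟩ := Filter.extraction_of_frequently_atTop hr
  set σ : ℕ → ℕ := φ ∘ ψ with hσ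
  have hσmono : StrictMono σ := hφmono.comp hψmono
  have hσtend : Tendsto (x ∘ σ) atTop (𝓝 y) := by
    have : Tendsto ψ atTop atTop := hψmono.tendsto_atTop
    exact (hφtend.comp this)
  have hσmod : ∀ k, σ k % l = r := fun k => hψ k
  have hrl : r < l := by
    have := hσmod 0
    rw [← this]; exact Nat.mod_lt _ hl
  -- every shifted subsequence converges to y
  have hshiftσ : ∀ j, Tendsto (fun k => x (σ k + j)) atTop (𝓝 y) := by
    intro j
    have h1 : Tendsto (fun k => x (σ k + j) - x (σ k)) atTop (𝓝 0) :=
      (hshift j).comp hσmono.tendsto_atTop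
    have := h1.add hσtend
    simpa using this
  -- y belongs to each Cᵢ
  have hyC : ∀ i, y ∈ C i := by
    intro i
    obtain ⟨j, hjl, hrj⟩ : ∃ j, j < l ∧ (r + j) % l = i.val := by
      refine ⟨if r ≤ i.val then i.val - r else i.val + l - r, ?_, ?_⟩
      · split <;> omega
      · split
        · have : r + (i.val - r) = i.val := by omega
          rw [this, Nat.mod_eq_of_lt i.isLt]
        · have : r + (i.val + l - r) = i.val + l := by omega
          rw [this, Nat.add_mod_right, Nat.mod_eq_of_lt i.isLt]
    have hmod : ∀ k, (σ k + j) % l = i.val := by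
      intro k
      rw [Nat.add_mod, hσmod k, Nat.mod_eq_of_lt hjl]
      exact hrj
    have hmem : ∀ k, x (σ k + j + 1) ∈ C i := by
      intro k
      have := (hstep (σ k + j)).1
      have heq : (⟨(σ k + j) % l, Nat.mod_lt _ hl⟩ : Fin l) = i :=
        Fin.ext (by simpa using hmod k)
      rwa [heq] at this
    have htend : Tendsto (fun k => x (σ k + (j + 1))) atTop (𝓝 y) := hshiftσ (j + 1)
    refine (hclosed i).mem_of_tendsto htend (Filter.Eventually.of_forall fun k => ?_)
    simpa [← add_assoc] using hmem k
  -- finally, the whole sequence converges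
  refine ⟨y, Set.mem_iInter.mpr hyC, ?_⟩
  have antiy := anti y hyC
  have hE : Tendsto (fun n => ‖x n - y‖) atTop (𝓝 (⨅ n, ‖x n - y‖)) :=
    tendsto_atTop_ciInf antiy ⟨0, by rintro b ⟨n, rfl⟩; exact norm_nonneg _⟩
  have hsub : Tendsto (fun k => ‖x (σ k) - y‖) atTop (𝓝 (⨅ n, ‖x n - y‖)) :=
    hE.comp hσmono.tendsto_atTop
  have hsub0 : Tendsto (fun k => ‖x (σ k) - y‖) atTop (𝓝 0) := by
    have h2 : Tendsto (fun k => x (σ k) - y) atTop (𝓝 (y - y)) :=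
      hσtend.sub tendsto_const_nhds
    rw [show y - y = 0 by simp] at h2
    simpa using h2.norm
  have hiInf0 : (⨅ n, ‖x n - y‖) = 0 := tendsto_nhds_unique hsub hsub0
  rw [tendsto_iff_norm_sub_tendsto_zero]
  rw [hiInf0] at hE
  exact hE
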